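/- Let ν ∈ ℝ² be a unit vector and ν⊥ its rotation by π/2, let x₀ ∈ ℝ², let C_j, S_j, a_j (j = 1,…,4) be real numbers satisfying the identities Σ a_j C_j = 0, Σ a_j S_j = 0, Σ a_j C_j² = 2, and set x_j = x₀ + C_j ν + S_j ν⊥ and r_j = √(C_j² + S_j²). Let u: ℝ² → ℝ be three times continuously differentiable, and suppose the operator norm of the third Fréchet derivative of u is bounded by M₃ on the closed ball of radius max_j r_j centred at x₀. Then the approximation error of the generalised finite difference scheme satisfies |Σ_{j=1}^{4} a_j (u(x_j) − u(x₀)) − u_{νν}(x₀)| ≤ |u_{νν⊥}(x₀)|·|Σ_{j=1}^{4} a_j C_j S_j| + (1/2)|u_{ν⊥ν⊥}(x₀)|·Σ_{j=1}^{4} |a_j| S_j² + (M₃/6)·Σ_{j=1}^{4} |a_j| r_j³, where u_{νν}, u_{νν⊥}, u_{ν⊥ν⊥} denote the second directional derivatives of u in the indicated pairs of directions. -/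

import Mathlib

open Set

set_option synthInstance.maxHeartbeats 400000 in
set_option maxHeartbeats 1000000 in
lemma taylor2_bound (u : ℝ × ℝ → ℝ) (hu : ContDiff ℝ 3 u) (x₀ h : ℝ × ℝ) (M : ℝ)
    (hM : ∀ t ∈ Icc (0:ℝ) 1, ‖iteratedFDeriv ℝ 3 u (x₀ + t • h)‖ ≤ M) :
    |u (x₀ + h) - u x₀ - fderiv ℝ u x₀ h
       - (1/2) * (fderiv ℝ (fderiv ℝ u) x₀ h h)| ≤ M / 6 * ‖h‖^3 := by
  set L : ℝ → ℝ × ℝ := fun t => x₀ + t • h with hLdef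
  have hL : ∀ t : ℝ, HasDerivAt L h t := by
    intro t
    have := ((hasDerivAt_id t).smul_const h).const_add x₀
    rwa [one_smul] at this
  have hud : Differentiable ℝ u := hu.differentiable (by norm_num)
  have hu' : ContDiff ℝ 2 (fderiv ℝ u) := hu.fderiv_right (by norm_num)
  have hu'' : ContDiff ℝ 1 (fderiv ℝ (fderiv ℝ u)) := hu'.fderiv_right (by norm_num)
  set g : ℝ → ℝ := fun t => u (L t) with hgdef
  set g1 : ℝ → ℝ := fun t => fderiv ℝ u (L t) h with hg1def
  set g2 : ℝ → ℝ := fun t => fderiv ℝ (fderiv ℝ u) (L t) h h with hg2def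
  set g3 : ℝ → ℝ := fun t => fderiv ℝ (fderiv ℝ (fderiv ℝ u)) (L t) h h h with hg3def
  have hd1 : ∀ t : ℝ, HasDerivAt g (g1 t) t := fun t =>
    (hud (L t)).hasFDerivAt.comp_hasDerivAt t (hL t)
  have hd2 : ∀ t : ℝ, HasDerivAt g1 (g2 t) t := by
    intro t
    have hc : HasFDerivAt (fun y => fderiv ℝ u y h)
        ((fderiv ℝ (fderiv ℝ u) (L t)).flip h) (L t) := by
      have := ((hu'.differentiable (by norm_num)) (L t)).hasFDerivAt.clm_apply
        (hasFDerivAt_const h (L t))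
      simpa using this
    exact hc.comp_hasDerivAt t (hL t)
  have hd3 : ∀ t : ℝ, HasDerivAt g2 (g3 t) t := by
    intro t
    have hA : HasFDerivAt (fun y => fderiv ℝ (fderiv ℝ u) y h)
        ((fderiv ℝ (fderiv ℝ (fderiv ℝ u)) (L t)).flip h) (L t) := by
      have := ((hu''.differentiable (by norm_num)) (L t)).hasFDerivAt.clm_apply
        (hasFDerivAt_const h (L t))
      simpa using this
    have hB : HasFDerivAt (fun y => fderiv ℝ (fderiv ℝ u) y h h)
        (((fderiv ℝ (fderiv ℝ (fderiv ℝ u)) (L t)).flip h).flip h) (L t) := by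
      have := hA.clm_apply (hasFDerivAt_const h (L t))
      simpa using this
    exact hB.comp_hasDerivAt t (hL t)
  -- bound on g3
  have hg3 : ∀ t ∈ Icc (0:ℝ) 1, |g3 t| ≤ M * ‖h‖^3 := by
    intro t ht
    have hrepr : g3 t = iteratedFDeriv ℝ 3 u (L t) ![h, h, h] := by
      rw [iteratedFDeriv_succ_apply_right, iteratedFDeriv_two_apply]
      rfl
    have hb := (iteratedFDeriv ℝ 3 u (L t)).le_opNorm ![h, h, h]
    have hprod : (∏ i, ‖(![h, h, h] : Fin 3 → ℝ × ℝ) i‖) = ‖h‖^3 := by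
      simp [Fin.prod_univ_succ]; ring
    rw [hprod] at hb
    calc |g3 t| = ‖iteratedFDeriv ℝ 3 u (L t) ![h, h, h]‖ := by rw [hrepr]; rfl
      _ ≤ ‖iteratedFDeriv ℝ 3 u (L t)‖ * ‖h‖^3 := hb
      _ ≤ M * ‖h‖^3 := mul_le_mul_of_nonneg_right (hM t ht) (by positivity)
  -- Taylor
  have hUD : UniqueDiffOn ℝ (Icc (0:ℝ) 1) := uniqueDiffOn_Icc one_pos
  have hgC : ContDiff ℝ 3 g :=
    hu.comp (contDiff_const.add (contDiff_id.smul contDiff_const))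
  have e1 : EqOn (iteratedDerivWithin 1 g (Icc 0 1)) g1 (Icc 0 1) := by
    intro y hy
    rw [iteratedDerivWithin_one]
    exact ((hd1 y).hasDerivWithinAt).derivWithin (hUD y hy)
  have e2 : EqOn (iteratedDerivWithin 2 g (Icc 0 1)) g2 (Icc 0 1) := by
    intro y hy
    rw [iteratedDerivWithin_succ, derivWithin_congr e1 (e1 hy)]
    exact ((hd2 y).hasDerivWithinAt).derivWithin (hUD y hy)
  have e3 : EqOn (iteratedDerivWithin 3 g (Icc 0 1)) g3 (Icc 0 1) := by
    intro y hy
    rw [iteratedDerivWithin_succ, derivWithin_congr e2 (e2 hy)]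
    exact ((hd3 y).hasDerivWithinAt).derivWithin (hUD y hy)
  have hfc : ContDiffOn ℝ 2 g (Icc (0:ℝ) 1) := (hgC.of_le (by norm_num)).contDiffOn
  have hf' : DifferentiableOn ℝ (iteratedDerivWithin 2 g (Icc (0:ℝ) 1)) (Ioo (0:ℝ) 1) := by
    intro y hy
    have hy' : y ∈ Icc (0:ℝ) 1 := Ioo_subset_Icc_self hy
    exact ((((hd3 y).differentiableAt).differentiableWithinAt (s := Icc 0 1)).congr
      (fun z hz => e2 hz) (e2 hy')).mono Ioo_subset_Icc_self
  obtain ⟨x', hx', heq⟩ := taylor_mean_remainder_lagrange (n := 2) (x₀ := 0) (x := 1)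
    zero_ne_one (by rwa [uIcc_of_le zero_le_one])
    (by rwa [uIcc_of_le zero_le_one, uIoo_of_le zero_le_one])
  simp only [uIcc_of_le (zero_le_one' ℝ), uIoo_of_le (zero_le_one' ℝ)] at hx' heq
  have htay : taylorWithinEval g 2 (Icc (0:ℝ) 1) 0 1 = g 0 + g1 0 + (1/2) * g2 0 := by
    rw [taylor_within_apply]
    simp [Finset.sum_range_succ, e1 (left_mem_Icc.2 zero_le_one), e2 (left_mem_Icc.2 zero_le_one)]
  have hgoal : u (x₀ + h) - u x₀ - fderiv ℝ u x₀ h - (1/2) * (fderiv ℝ (fderiv ℝ u) x₀ h h)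
      = g 1 - taylorWithinEval g 2 (Icc (0:ℝ) 1) 0 1 := by
    rw [htay]
    have h1 : g 1 = u (x₀ + h) := by simp [hgdef, hLdef]
    have h0 : g 0 = u x₀ := by simp [hgdef, hLdef]
    have h10 : g1 0 = fderiv ℝ u x₀ h := by simp [hg1def, hLdef]
    have h20 : g2 0 = fderiv ℝ (fderiv ℝ u) x₀ h h := by simp [hg2def, hLdef]
    rw [h1, h0, h10, h20]; ring
  rw [hgoal, heq, e3 (Ioo_subset_Icc_self hx')]
  have hb := hg3 x' (Ioo_subset_Icc_self hx')
  have h6 : (((2 + 1 : ℕ).factorial : ℝ)) = 6 := by norm_num [Nat.factorial]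
  rw [h6]
  rw [show |g3 x' * (1 - 0) ^ (2 + 1) / 6| = |g3 x'| / 6 by
    rw [abs_div, abs_mul]; norm_num]
  calc |g3 x'| / 6 ≤ (M * ‖h‖^3) / 6 := by gcongr
    _ = M / 6 * ‖h‖^3 := by ring

lemma taylor2_point (u : ℝ × ℝ → ℝ) (hu : ContDiff ℝ 3 u) (x₀ ν p : ℝ × ℝ)
    (hν : ν.1^2 + ν.2^2 = 1) (hp : p = (-ν.2, ν.1))
    (C S r R M : ℝ) (hr : r = Real.sqrt (C^2 + S^2)) (hrR : r ≤ R) (hM0 : 0 ≤ M)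
    (hM : ∀ x ∈ Metric.closedBall x₀ R, ‖iteratedFDeriv ℝ 3 u x‖ ≤ M) :
    |u (x₀ + C • ν + S • p) - u x₀ - (C * fderiv ℝ u x₀ ν + S * fderiv ℝ u x₀ p)
      - (1/2) * (C^2 * fderiv ℝ (fderiv ℝ u) x₀ ν ν
          + 2*C*S * fderiv ℝ (fderiv ℝ u) x₀ ν p
          + S^2 * fderiv ℝ (fderiv ℝ u) x₀ p p)| ≤ M / 6 * r^3 := by
  set h : ℝ × ℝ := C • ν + S • p with hhdef
  have hr0 : 0 ≤ r := hr ▸ Real.sqrt_nonneg _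
  have hcomp1 : h.1 = C * ν.1 - S * ν.2 := by simp [hhdef, hp]; ring
  have hcomp2 : h.2 = C * ν.2 + S * ν.1 := by simp [hhdef, hp]
  have hhr : ‖h‖ ≤ r := by
    rw [Prod.norm_def]
    have k1 : |h.1| ≤ r := by
      rw [← Real.sqrt_sq_eq_abs, hr]
      apply Real.sqrt_le_sqrt
      rw [hcomp1]; nlinarith [sq_nonneg (C * ν.2 + S * ν.1)]
    have k2 : |h.2| ≤ r := by
      rw [← Real.sqrt_sq_eq_abs, hr]
      apply Real.sqrt_le_sqrt
      rw [hcomp2]; nlinarith [sq_nonneg (C * ν.1 - S * ν.2)]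
    simpa [Real.norm_eq_abs] using max_le k1 k2
  have hM' : ∀ t ∈ Icc (0:ℝ) 1, ‖iteratedFDeriv ℝ 3 u (x₀ + t • h)‖ ≤ M := by
    intro t ht
    apply hM
    rw [Metric.mem_closedBall, dist_eq_norm, add_sub_cancel_left, norm_smul,
      Real.norm_eq_abs]
    calc |t| * ‖h‖ ≤ 1 * r := by
          apply mul_le_mul _ hhr (norm_nonneg h) zero_le_one
          rw [abs_le]; constructor <;> linarith [ht.1, ht.2]
      _ ≤ R := by linarith
  have key := taylor2_bound u hu x₀ h M hM'
  have hud : Differentiable ℝ u := hu.differentiable (by norm_num)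
  have hu' : ContDiff ℝ 2 (fderiv ℝ u) := hu.fderiv_right (by norm_num)
  have hsym : fderiv ℝ (fderiv ℝ u) x₀ p ν = fderiv ℝ (fderiv ℝ u) x₀ ν p :=
    second_derivative_symmetric (fun y => (hud y).hasFDerivAt)
      ((hu'.differentiable (by norm_num) x₀).hasFDerivAt) p ν
  have hDh : fderiv ℝ u x₀ h = C * fderiv ℝ u x₀ ν + S * fderiv ℝ u x₀ p := by
    simp [hhdef, map_add, map_smul, smul_eq_mul]
  have hBh : fderiv ℝ (fderiv ℝ u) x₀ h h
      = C^2 * fderiv ℝ (fderiv ℝ u) x₀ ν ν + 2*C*S * fderiv ℝ (fderiv ℝ u) x₀ ν p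
        + S^2 * fderiv ℝ (fderiv ℝ u) x₀ p p := by
    simp [hhdef, map_add, map_smul, smul_eq_mul, ContinuousLinearMap.add_apply,
      ContinuousLinearMap.smul_apply]
    rw [hsym]; ring
  have hassoc : x₀ + C • ν + S • p = x₀ + h := by rw [hhdef, add_assoc]
  rw [hassoc, ← hDh, ← hBh]
  calc |u (x₀ + h) - u x₀ - fderiv ℝ u x₀ h - 1/2 * (fderiv ℝ (fderiv ℝ u) x₀ h h)|
      ≤ M / 6 * ‖h‖^3 := by
        have : (1:ℝ)/2 * (fderiv ℝ (fderiv ℝ u) x₀ h h)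
            = (1/2) * (fderiv ℝ (fderiv ℝ u) x₀ h h) := by ring
        rw [this]; exact key
    _ ≤ M / 6 * r^3 := by
        apply mul_le_mul_of_nonneg_left _ (by positivity)
        exact pow_le_pow_left₀ (norm_nonneg h) hhr 3

/-- Truncation error estimate for the generalised finite
difference approximation of the second directional derivative `u_{νν}(x₀)`. -/
theorem gfd_truncation_error
    (ν : ℝ × ℝ) (hν : ν.1^2 + ν.2^2 = 1)
    (νperp : ℝ × ℝ) (hνperp : νperp = (-ν.2, ν.1))
    (x₀ : ℝ × ℝ)
    (C₁ S₁ C₂ S₂ C₃ S₃ C₄ S₄ a₁ a₂ a₃ a₄ : ℝ)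
    (hsum1 : a₁*C₁ + a₂*C₂ + a₃*C₃ + a₄*C₄ = 0)
    (hsum2 : a₁*S₁ + a₂*S₂ + a₃*S₃ + a₄*S₄ = 0)
    (hsum3 : a₁*C₁^2 + a₂*C₂^2 + a₃*C₃^2 + a₄*C₄^2 = 2)
    (x₁ x₂ x₃ x₄ : ℝ × ℝ)
    (hx₁ : x₁ = x₀ + C₁ • ν + S₁ • νperp)
    (hx₂ : x₂ = x₀ + C₂ • ν + S₂ • νperp)
    (hx₃ : x₃ = x₀ + C₃ • ν + S₃ • νperp)
    (hx₄ : x₄ = x₀ + C₄ • ν + S₄ • νperp)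
    (r₁ r₂ r₃ r₄ : ℝ)
    (hr₁ : r₁ = Real.sqrt (C₁^2 + S₁^2))
    (hr₂ : r₂ = Real.sqrt (C₂^2 + S₂^2))
    (hr₃ : r₃ = Real.sqrt (C₃^2 + S₃^2))
    (hr₄ : r₄ = Real.sqrt (C₄^2 + S₄^2))
    (u : ℝ × ℝ → ℝ) (hu : ContDiff ℝ 3 u)
    (M₃ : ℝ)
    (hM₃ : ∀ x ∈ Metric.closedBall x₀ (max (max r₁ r₂) (max r₃ r₄)),
      ‖iteratedFDeriv ℝ 3 u x‖ ≤ M₃) :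
    |a₁ * (u x₁ - u x₀) + a₂ * (u x₂ - u x₀)
        + a₃ * (u x₃ - u x₀) + a₄ * (u x₄ - u x₀)
      - iteratedFDeriv ℝ 2 u x₀ ![ν, ν]|
    ≤ |iteratedFDeriv ℝ 2 u x₀ ![ν, νperp]|
        * |a₁*C₁*S₁ + a₂*C₂*S₂ + a₃*C₃*S₃ + a₄*C₄*S₄|
      + (1/2) * |iteratedFDeriv ℝ 2 u x₀ ![νperp, νperp]|
        * (|a₁| *S₁^2 + |a₂| *S₂^2 + |a₃| *S₃^2 + |a₄| *S₄^2)
      + (M₃/6) * (|a₁| *r₁^3 + |a₂| *r₂^3 + |a₃| *r₃^3 + |a₄| *r₄^3) := by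
  set R := max (max r₁ r₂) (max r₃ r₄) with hRdef
  have hR0 : 0 ≤ R := le_trans (hr₁ ▸ Real.sqrt_nonneg _) (le_max_of_le_left (le_max_left _ _))
  have hM0 : 0 ≤ M₃ := (norm_nonneg _).trans (hM₃ x₀ (Metric.mem_closedBall_self hR0))
  -- rewrite iterated derivatives
  rw [iteratedFDeriv_two_apply, iteratedFDeriv_two_apply, iteratedFDeriv_two_apply]
  simp only [Matrix.cons_val_zero, Matrix.cons_val_one, Matrix.head_cons]
  set Dν := fderiv ℝ u x₀ ν with hDν
  set Dp := fderiv ℝ u x₀ νperp with hDp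
  set Bνν := fderiv ℝ (fderiv ℝ u) x₀ ν ν with hBνν
  set Bνp := fderiv ℝ (fderiv ℝ u) x₀ ν νperp with hBνp
  set Bpp := fderiv ℝ (fderiv ℝ u) x₀ νperp νperp with hBpp
  set E₁ := u x₁ - u x₀ - (C₁ * Dν + S₁ * Dp)
      - (1/2) * (C₁^2 * Bνν + 2*C₁*S₁ * Bνp + S₁^2 * Bpp) with hE₁def
  set E₂ := u x₂ - u x₀ - (C₂ * Dν + S₂ * Dp)
      - (1/2) * (C₂^2 * Bνν + 2*C₂*S₂ * Bνp + S₂^2 * Bpp) with hE₂def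
  set E₃ := u x₃ - u x₀ - (C₃ * Dν + S₃ * Dp)
      - (1/2) * (C₃^2 * Bνν + 2*C₃*S₃ * Bνp + S₃^2 * Bpp) with hE₃def
  set E₄ := u x₄ - u x₀ - (C₄ * Dν + S₄ * Dp)
      - (1/2) * (C₄^2 * Bνν + 2*C₄*S₄ * Bνp + S₄^2 * Bpp) with hE₄def
  have hE₁ : |E₁| ≤ M₃/6 * r₁^3 := by
    rw [hE₁def, hx₁]
    exact taylor2_point u hu x₀ ν νperp hν hνperp C₁ S₁ r₁ R M₃ hr₁
      (le_max_of_le_left (le_max_left _ _)) hM0 hM₃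
  have hE₂ : |E₂| ≤ M₃/6 * r₂^3 := by
    rw [hE₂def, hx₂]
    exact taylor2_point u hu x₀ ν νperp hν hνperp C₂ S₂ r₂ R M₃ hr₂
      (le_max_of_le_left (le_max_right _ _)) hM0 hM₃
  have hE₃ : |E₃| ≤ M₃/6 * r₃^3 := by
    rw [hE₃def, hx₃]
    exact taylor2_point u hu x₀ ν νperp hν hνperp C₃ S₃ r₃ R M₃ hr₃
      (le_max_of_le_right (le_max_left _ _)) hM0 hM₃
  have hE₄ : |E₄| ≤ M₃/6 * r₄^3 := by
    rw [hE₄def, hx₄]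
    exact taylor2_point u hu x₀ ν νperp hν hνperp C₄ S₄ r₄ R M₃ hr₄
      (le_max_of_le_right (le_max_right _ _)) hM0 hM₃
  set T := a₁*C₁*S₁ + a₂*C₂*S₂ + a₃*C₃*S₃ + a₄*C₄*S₄ with hTdef
  set Sq := a₁*S₁^2 + a₂*S₂^2 + a₃*S₃^2 + a₄*S₄^2 with hSqdef
  have hkey : a₁ * (u x₁ - u x₀) + a₂ * (u x₂ - u x₀)
      + a₃ * (u x₃ - u x₀) + a₄ * (u x₄ - u x₀) - Bνν
      = Bνp * T + (1/2) * Bpp * Sq + (a₁*E₁ + a₂*E₂ + a₃*E₃ + a₄*E₄) := by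
    rw [hE₁def, hE₂def, hE₃def, hE₄def, hTdef, hSqdef]
    linear_combination Dν*hsum1 + Dp*hsum2 + (Bνν/2)*hsum3
  rw [hkey]
  have habs : ∀ a s : ℝ, |a * s^2| = |a| * s^2 := fun a s => by
    rw [abs_mul, abs_pow, sq_abs]
  have hSq : |Sq| ≤ |a₁| *S₁^2 + |a₂| *S₂^2 + |a₃| *S₃^2 + |a₄| *S₄^2 := by
    rw [hSqdef]
    calc |a₁*S₁^2 + a₂*S₂^2 + a₃*S₃^2 + a₄*S₄^2|
        ≤ |a₁*S₁^2 + a₂*S₂^2 + a₃*S₃^2| + |a₄*S₄^2| := abs_add_le _ _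
      _ ≤ (|a₁*S₁^2 + a₂*S₂^2| + |a₃*S₃^2|) + |a₄*S₄^2| := by
          exact add_le_add_left (abs_add_le _ _) _
      _ ≤ ((|a₁*S₁^2| + |a₂*S₂^2|) + |a₃*S₃^2|) + |a₄*S₄^2| := by
          exact add_le_add_left (add_le_add_left (abs_add_le _ _) _) _
      _ = |a₁| *S₁^2 + |a₂| *S₂^2 + |a₃| *S₃^2 + |a₄| *S₄^2 := by
          rw [habs, habs, habs, habs]
  have hZ : |a₁*E₁ + a₂*E₂ + a₃*E₃ + a₄*E₄|
      ≤ (M₃/6) * (|a₁| *r₁^3 + |a₂| *r₂^3 + |a₃| *r₃^3 + |a₄| *r₄^3) := by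
    have step : ∀ (a E r' : ℝ), |E| ≤ M₃/6 * r'^3 → |a * E| ≤ |a| * (M₃/6 * r'^3) :=
      fun a E r' hE => by
        rw [abs_mul]; exact mul_le_mul_of_nonneg_left hE (abs_nonneg a)
    calc |a₁*E₁ + a₂*E₂ + a₃*E₃ + a₄*E₄|
        ≤ |a₁*E₁ + a₂*E₂ + a₃*E₃| + |a₄*E₄| := abs_add_le _ _
      _ ≤ (|a₁*E₁ + a₂*E₂| + |a₃*E₃|) + |a₄*E₄| := add_le_add_left (abs_add_le _ _) _
      _ ≤ ((|a₁*E₁| + |a₂*E₂|) + |a₃*E₃|) + |a₄*E₄| :=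
          add_le_add_left (add_le_add_left (abs_add_le _ _) _) _
      _ ≤ ((|a₁| * (M₃/6 * r₁^3) + |a₂| * (M₃/6 * r₂^3)) + |a₃| * (M₃/6 * r₃^3))
            + |a₄| * (M₃/6 * r₄^3) := by
          exact add_le_add (add_le_add (add_le_add (step _ _ _ hE₁)
            (step _ _ _ hE₂)) (step _ _ _ hE₃)) (step _ _ _ hE₄)
      _ = (M₃/6) * (|a₁| *r₁^3 + |a₂| *r₂^3 + |a₃| *r₃^3 + |a₄| *r₄^3) := by ring
  calc |Bνp * T + (1/2) * Bpp * Sq + (a₁*E₁ + a₂*E₂ + a₃*E₃ + a₄*E₄)|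
      ≤ |Bνp * T + (1/2) * Bpp * Sq| + |a₁*E₁ + a₂*E₂ + a₃*E₃ + a₄*E₄| := abs_add_le _ _
    _ ≤ (|Bνp * T| + |(1/2) * Bpp * Sq|) + |a₁*E₁ + a₂*E₂ + a₃*E₃ + a₄*E₄| :=
        add_le_add_left (abs_add_le _ _) _
    _ ≤ (|Bνp| * |T| + (1/2) * |Bpp| * (|a₁| *S₁^2 + |a₂| *S₂^2 + |a₃| *S₃^2 + |a₄| *S₄^2))
          + (M₃/6) * (|a₁| *r₁^3 + |a₂| *r₂^3 + |a₃| *r₃^3 + |a₄| *r₄^3) := by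
        apply add_le_add _ hZ
        apply add_le_add (le_of_eq (abs_mul _ _))
        rw [abs_mul, abs_mul]
        rw [show |(1:ℝ)/2| = 1/2 by norm_num]
        exact mul_le_mul_of_nonneg_left hSq (by positivity)
    _ = |Bνp| * |T| + (1/2) * |Bpp| * (|a₁| *S₁^2 + |a₂| *S₂^2 + |a₃| *S₃^2 + |a₄| *S₄^2)
          + (M₃/6) * (|a₁| *r₁^3 + |a₂| *r₂^3 + |a₃| *r₃^3 + |a₄| *r₄^3) := by ring
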